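/- Let A be an m×n integer matrix, let U be an m×m integer matrix invertible over ℤ, and let V be an n×n integer matrix invertible over ℤ. Then for every i with 1 ≤ i ≤ min(m, n), the i-th determinant divisor of U·A·V equals the i-th determinant divisor of A: d_i(U·A·V) = d_i(A). -/
import Mathlib


open Classical in
/-- The `i`-th determinant divisor of an integer matrix `A`: the greatest common divisor
(as a natural number) of all `i×i` minors of `A`, i.e. of the determinants of the `i×i`
submatrices obtained by selecting `i` rows via a strictly increasing map `Fin i → Fin m`
and `i` columns via a strictly increasing map `Fin i → Fin n`; by convention
`detDivisor A 0 = 1`. -/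
noncomputable def detDivisor {m n : ℕ} (A : Matrix (Fin m) (Fin n) ℤ) : ℕ → ℕ
  | 0 => 1
  | (i + 1) =>
    (Finset.gcd
      (Finset.univ.filter
        (fun p : (Fin (i + 1) → Fin m) × (Fin (i + 1) → Fin n) =>
          StrictMono p.1 ∧ StrictMono p.2))
      (fun p => (A.submatrix p.1 p.2).det)).natAbs



open Matrix Finset

/-- If `d` divides every `i×i` "generalized minor" of `A` (arbitrary row/column selections),
then it divides every such minor of `U * A`. -/
private lemma dvd_det_submatrix_mul_left {m n i : ℕ}
    (A : Matrix (Fin m) (Fin n) ℤ) (U : Matrix (Fin m) (Fin m) ℤ) (d : ℤ)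
    (h : ∀ (f : Fin i → Fin m) (g : Fin i → Fin n), d ∣ (A.submatrix f g).det)
    (f : Fin i → Fin m) (g : Fin i → Fin n) :
    d ∣ ((U * A).submatrix f g).det := by
  classical
  have hrow : ((U * A).submatrix f g) =
      Matrix.of (fun j => ∑ k : Fin m, U (f j) k • (fun l => A k (g l))) := by
    ext j l
    simp [Matrix.mul_apply, Finset.sum_apply]
  have hdet : ((U * A).submatrix f g).det =
      (Matrix.detRowAlternating : (Fin i → ℤ) [⋀^Fin i]→ₗ[ℤ] ℤ).toMultilinearMap
        (fun j => ∑ k : Fin m, U (f j) k • (fun l => A k (g l))) := by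
    rw [hrow]; rfl
  rw [hdet]
  rw [MultilinearMap.map_sum]
  refine Finset.dvd_sum fun p _ => ?_
  rw [MultilinearMap.map_smul_univ]
  have : (Matrix.detRowAlternating : (Fin i → ℤ) [⋀^Fin i]→ₗ[ℤ] ℤ).toMultilinearMap
      (fun j l => A (p j) (g l)) = (A.submatrix p g).det := rfl
  rw [this, smul_eq_mul]
  exact Dvd.dvd.mul_left (h p g) _

/-- If `d` divides every strictly monotone minor, it divides every generalized minor. -/
private lemma dvd_det_submatrix_of_strictMono {m n i : ℕ}
    (A : Matrix (Fin m) (Fin n) ℤ) (d : ℤ)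
    (h : ∀ (f : Fin i → Fin m) (g : Fin i → Fin n),
      StrictMono f → StrictMono g → d ∣ (A.submatrix f g).det) :
    ∀ (f : Fin i → Fin m) (g : Fin i → Fin n), d ∣ (A.submatrix f g).det := by
  classical
  -- first: reduce rows only
  have rows : ∀ (B : Matrix (Fin m) (Fin n) ℤ),
      (∀ (f : Fin i → Fin m) (g : Fin i → Fin n), StrictMono f → d ∣ (B.submatrix f g).det) →
      ∀ (f : Fin i → Fin m) (g : Fin i → Fin n), d ∣ (B.submatrix f g).det := by
    intro B hB f g
    by_cases hf : Function.Injective f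
    · set σ := Tuple.sort f with hσ
      have hmono : StrictMono (f ∘ σ) :=
        (Tuple.monotone_sort f).strictMono_of_injective (hf.comp σ.injective)
      have hfactor : B.submatrix f g = (B.submatrix (f ∘ σ) g).submatrix σ.symm id := by
        ext j l
        simp [Matrix.submatrix_apply]
      rw [hfactor, Matrix.det_permute]
      exact Dvd.dvd.mul_left (hB _ _ hmono) _
    · rw [Function.not_injective_iff] at hf
      obtain ⟨a, b, hab, hne⟩ := hf
      have : (B.submatrix f g).det = 0 :=
        Matrix.det_zero_of_row_eq hne (by ext l; simp [Matrix.submatrix_apply, hab])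
      simp [this]
  refine rows A (fun f g hf => ?_)
  -- now reduce columns, for fixed strictly monotone f
  by_cases hg : Function.Injective g
  · set σ := Tuple.sort g with hσ
    have hmono : StrictMono (g ∘ σ) :=
      (Tuple.monotone_sort g).strictMono_of_injective (hg.comp σ.injective)
    have hfactor : A.submatrix f g = (A.submatrix f (g ∘ σ)).submatrix id σ.symm := by
      ext j l
      simp [Matrix.submatrix_apply]
    rw [hfactor, Matrix.det_permute']
    exact Dvd.dvd.mul_left (h _ _ hf hmono) _
  · rw [Function.not_injective_iff] at hg
    obtain ⟨a, b, hab, hne⟩ := hg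
    have : (A.submatrix f g).det = 0 :=
      Matrix.det_zero_of_column_eq hne (fun k => by simp [Matrix.submatrix_apply, hab])
    simp [this]

/-- If `d` divides every generalized minor of `A`, it divides every generalized minor
of `U * A * V`. -/
private lemma dvd_det_submatrix_conj {m n i : ℕ}
    (A : Matrix (Fin m) (Fin n) ℤ) (U : Matrix (Fin m) (Fin m) ℤ)
    (V : Matrix (Fin n) (Fin n) ℤ) (d : ℤ)
    (h : ∀ (f : Fin i → Fin m) (g : Fin i → Fin n), d ∣ (A.submatrix f g).det)
    (f : Fin i → Fin m) (g : Fin i → Fin n) :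
    d ∣ (((U * A * V)).submatrix f g).det := by
  have hAV : ∀ (f : Fin i → Fin m) (g : Fin i → Fin n), d ∣ ((A * V).submatrix f g).det := by
    intro f g
    have ht : ((A * V).submatrix f g).det = ((Vᵀ * Aᵀ).submatrix g f).det := by
      rw [← Matrix.det_transpose, Matrix.transpose_submatrix, Matrix.transpose_mul]
    rw [ht]
    refine dvd_det_submatrix_mul_left Aᵀ Vᵀ d (fun p q => ?_) g f
    have : (Aᵀ.submatrix p q).det = ((A.submatrix q p)).det := by
      rw [← Matrix.det_transpose, Matrix.transpose_submatrix, Matrix.transpose_transpose]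
    rw [this]; exact h q p
  have : U * A * V = U * (A * V) := by rw [Matrix.mul_assoc]
  rw [this]
  exact dvd_det_submatrix_mul_left (A * V) U d hAV f g

open Classical in
private lemma detDivisor_dvd_aux {m n : ℕ}
    (A : Matrix (Fin m) (Fin n) ℤ)
    (U : Matrix (Fin m) (Fin m) ℤ) (V : Matrix (Fin n) (Fin n) ℤ)
    (k : ℕ) :
    detDivisor A (k + 1) ∣ detDivisor (U * A * V) (k + 1) := by
  classical
  simp only [detDivisor]
  rw [Int.natAbs_dvd_natAbs]
  set S := Finset.univ.filter
      (fun p : (Fin (k + 1) → Fin m) × (Fin (k + 1) → Fin n) =>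
        StrictMono p.1 ∧ StrictMono p.2)
  set d := Finset.gcd S (fun p => (A.submatrix p.1 p.2).det) with hd
  refine Finset.dvd_gcd fun p hp => ?_
  refine dvd_det_submatrix_conj A U V d ?_ p.1 p.2
  refine dvd_det_submatrix_of_strictMono A d (fun f g hf hg => ?_)
  exact Finset.gcd_dvd (show (f, g) ∈ S from Finset.mem_filter.mpr ⟨Finset.mem_univ _, hf, hg⟩)


/-- Determinant divisors are invariant under multiplication by matrices
invertible over `ℤ`: if `U` is `m×m` unimodular and `V` is `n×n` unimodular, then
`d_i(U·A·V) = d_i(A)` for every `1 ≤ i ≤ min m n`. -/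
theorem detDivisor_unimodular_invariance
    {m n : ℕ}
    (A : Matrix (Fin m) (Fin n) ℤ)
    (U : Matrix (Fin m) (Fin m) ℤ) (V : Matrix (Fin n) (Fin n) ℤ)
    (hU : IsUnit U.det) (hV : IsUnit V.det) :
    ∀ i : ℕ, 1 ≤ i → i ≤ min m n → detDivisor (U * A * V) i = detDivisor A i := by
  rintro (_ | k) hi _
  · omega
  refine Nat.dvd_antisymm ?_ (detDivisor_dvd_aux A U V k)
  have hA : A = U⁻¹ * (U * A * V) * V⁻¹ := by
    rw [Matrix.mul_assoc (U⁻¹), Matrix.mul_assoc (U * A), Matrix.mul_nonsing_inv V hV,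
      Matrix.mul_one, ← Matrix.mul_assoc, Matrix.nonsing_inv_mul U hU, Matrix.one_mul]
  conv_rhs => rw [hA]
  exact detDivisor_dvd_aux (U * A * V) U⁻¹ V⁻¹ k
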